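/- arXiv:1510.06718 — 5 statements merged into one kernel-verified Lean document; each statement's English description precedes it below -/
import Mathlib

section
/- Let B be a generalized Boolean algebra and I an ideal of B. Then the map ι(ξ) := {A ∈ B : C ⊆ A for some C ∈ ξ} sends ultrafilters of I (I being a generalized Boolean algebra in its own right) to ultrafilters of B, is injective, and its image is exactly the set of ultrafilters of B that contain some element of I. Moreover, for every A ∈ B, ι restricts to a homeomorphism from the Stone spectrum of the principal ideal I_A onto the cylinder set Z(A) ⊆ B̂. -/
variable {B : Type*}

/-- A filter of a generalized Boolean algebra: a nonempty subset not containing `⊥`,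
upward closed, and closed under `⊓`. -/
def IsBFilter [GeneralizedBooleanAlgebra B] (ξ : Set B) : Prop :=
  ξ.Nonempty ∧ ⊥ ∉ ξ ∧ (∀ A ∈ ξ, ∀ C : B, A ≤ C → C ∈ ξ) ∧ ∀ A ∈ ξ, ∀ C ∈ ξ, A ⊓ C ∈ ξ

/-- An ultrafilter of a generalized Boolean algebra: a filter satisfying (F3). -/
def IsBUltra [GeneralizedBooleanAlgebra B] (ξ : Set B) : Prop :=
  IsBFilter ξ ∧ ∀ A ∈ ξ, ∀ C C' : B, A = C ⊔ C' → C ∈ ξ ∨ C' ∈ ξ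

/-- The Stone spectrum of a generalized Boolean algebra: its set of ultrafilters. -/
structure BSpec (B : Type*) [GeneralizedBooleanAlgebra B] where
  carrier : Set B
  ultra : IsBUltra carrier

/-- The topology on the Stone spectrum generated by the cylinder sets. -/
instance (B : Type*) [GeneralizedBooleanAlgebra B] : TopologicalSpace (BSpec B) :=
  TopologicalSpace.generateFrom
    {S : Set (BSpec B) | ∃ A : B, S = {ξ : BSpec B | A ∈ ξ.carrier}}

/-- The cylinder set `Z(A)` of `A`. -/
def cylZ [GeneralizedBooleanAlgebra B] (A : B) : Set (BSpec B) :=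
  {ξ : BSpec B | A ∈ ξ.carrier}

/-- A filter of a subset `I` of a generalized Boolean algebra (e.g. an ideal),
`I` being regarded as a generalized Boolean algebra in its own right. -/
def IsBFilterIn [GeneralizedBooleanAlgebra B] (I ξ : Set B) : Prop :=
  ξ.Nonempty ∧ ξ ⊆ I ∧ ⊥ ∉ ξ ∧ (∀ A ∈ ξ, ∀ C ∈ I, A ≤ C → C ∈ ξ) ∧
    ∀ A ∈ ξ, ∀ C ∈ ξ, A ⊓ C ∈ ξ

/-- An ultrafilter of a subset `I` of a generalized Boolean algebra. -/
def IsBUltraIn [GeneralizedBooleanAlgebra B] (I ξ : Set B) : Prop :=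
  IsBFilterIn I ξ ∧ ∀ A ∈ ξ, ∀ C C' : B, A = C ⊔ C' → C ∈ ξ ∨ C' ∈ ξ

/-- The Stone spectrum of a subset `I` of a generalized Boolean algebra. -/
structure BSpecIn [GeneralizedBooleanAlgebra B] (I : Set B) where
  carrier : Set B
  ultra : IsBUltraIn I carrier

/-- The topology on the Stone spectrum of `I` generated by the cylinder sets of elements
of `I`. -/
instance [GeneralizedBooleanAlgebra B] (I : Set B) : TopologicalSpace (BSpecIn I) :=
  TopologicalSpace.generateFrom
    {S : Set (BSpecIn I) | ∃ A ∈ I, S = {ξ : BSpecIn I | A ∈ ξ.carrier}}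

/-- The map `ι` sending an ultrafilter of an ideal to the ultrafilter of `B` it generates. -/
def iotaSet [GeneralizedBooleanAlgebra B] (ξ : Set B) : Set B :=
  {A : B | ∃ C ∈ ξ, C ≤ A}

/-- An ideal of a generalized Boolean algebra. -/
def IsBIdeal [GeneralizedBooleanAlgebra B] (I : Set B) : Prop :=
  I.Nonempty ∧ (∀ A ∈ I, ∀ C ∈ I, A ⊔ C ∈ I) ∧ ∀ A ∈ I, ∀ C : B, A ⊓ C ∈ I


section Aux
variable [GeneralizedBooleanAlgebra B]

lemma aux_iota_ultra {I ξ : Set B} (hξ : IsBUltraIn I ξ) : IsBUltra (iotaSet ξ) := by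
  obtain ⟨⟨⟨C₀, hC₀⟩, hsub, hbot, hup, hinf⟩, hF3⟩ := hξ
  refine ⟨⟨⟨C₀, C₀, hC₀, le_rfl⟩, ?_, ?_, ?_⟩, ?_⟩
  · rintro ⟨C, hC, hle⟩
    exact hbot (by simpa [le_bot_iff.mp hle] using hC)
  · rintro A ⟨C, hC, hle⟩ D hAD
    exact ⟨C, hC, hle.trans hAD⟩
  · rintro A ⟨C, hC, hle⟩ A' ⟨C', hC', hle'⟩
    exact ⟨C ⊓ C', hinf C hC C' hC', inf_le_inf hle hle'⟩
  · rintro A ⟨D, hD, hle⟩ C C' rfl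
    have hD' : D = (D ⊓ C) ⊔ (D ⊓ C') := by
      rw [← inf_sup_left, inf_eq_left.mpr hle]
    rcases hF3 D hD (D ⊓ C) (D ⊓ C') hD' with h | h
    · exact Or.inl ⟨D ⊓ C, h, inf_le_right⟩
    · exact Or.inr ⟨D ⊓ C', h, inf_le_right⟩

lemma aux_iota_inj {I ξ ζ : Set B} (hξ : IsBUltraIn I ξ) (hζ : IsBUltraIn I ζ)
    (h : iotaSet ξ = iotaSet ζ) : ξ = ζ := by
  have key : ∀ {α β : Set B}, IsBUltraIn I α → IsBUltraIn I β →
      iotaSet α ⊆ iotaSet β → α ⊆ β := by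
    intro α β hα hβ hsub A hA
    obtain ⟨C, hC, hle⟩ := hsub ⟨A, hA, le_rfl⟩
    exact hβ.1.2.2.2.1 C hC A (hα.1.2.1 hA) hle
  exact le_antisymm (key hξ hζ h.le) (key hζ hξ h.ge)

lemma aux_restrict {I : Set B} (hI : IsBIdeal I) {η : Set B} (hη : IsBUltra η)
    {A₀ : B} (hA₀I : A₀ ∈ I) (hA₀η : A₀ ∈ η) :
    IsBUltraIn I (η ∩ I) ∧ iotaSet (η ∩ I) = η := by
  obtain ⟨⟨hne, hbot, hup, hinf⟩, hF3⟩ := hη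
  constructor
  · refine ⟨⟨⟨A₀, hA₀η, hA₀I⟩, Set.inter_subset_right, fun h => hbot h.1,
      fun A hA C hCI hle => ⟨hup A hA.1 C hle, hCI⟩,
      fun A hA C hC => ⟨hinf A hA.1 C hC.1, ?_⟩⟩, ?_⟩
    · exact hI.2.2 A hA.2 C
    · rintro A hA C C' rfl
      have hCI : C ∈ I := by
        have := hI.2.2 _ hA.2 C
        rwa [inf_eq_right.mpr le_sup_left] at this
      have hC'I : C' ∈ I := by
        have := hI.2.2 _ hA.2 C'
        rwa [inf_eq_right.mpr le_sup_right] at this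
      rcases hF3 _ hA.1 C C' rfl with h | h
      · exact Or.inl ⟨h, hCI⟩
      · exact Or.inr ⟨h, hC'I⟩
  · ext A
    constructor
    · rintro ⟨C, ⟨hCη, _⟩, hle⟩
      exact hup C hCη A hle
    · intro hA
      exact ⟨A ⊓ A₀, ⟨hinf A hA A₀ hA₀η, by
        have := hI.2.2 A₀ hA₀I A; rwa [inf_comm] at this⟩, inf_le_left⟩

lemma aux_Iic_ideal (A : B) : IsBIdeal (Set.Iic A) :=
  ⟨⟨⊥, bot_le⟩, fun _ h _ h' => sup_le h h', fun _ h C => le_trans inf_le_left h⟩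

lemma aux_mem_iota_iff (A D : B) (ξ : BSpecIn (Set.Iic A)) :
    D ∈ iotaSet ξ.carrier ↔ A ⊓ D ∈ ξ.carrier := by
  constructor
  · rintro ⟨C, hC, hle⟩
    exact ξ.ultra.1.2.2.2.1 C hC (A ⊓ D) inf_le_left
      (le_inf (ξ.ultra.1.2.1 hC) hle)
  · intro h
    exact ⟨A ⊓ D, h, inf_le_right⟩

/-- The forward map of the homeomorphism. -/
def auxIotaMap (A : B) (ξ : BSpecIn (Set.Iic A)) : cylZ A :=
  ⟨⟨iotaSet ξ.carrier, aux_iota_ultra ξ.ultra⟩, by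
    obtain ⟨C, hC⟩ := ξ.ultra.1.1
    exact ⟨C, hC, ξ.ultra.1.2.1 hC⟩⟩

/-- The inverse map of the homeomorphism. -/
def auxIotaInv (A : B) (η : cylZ A) : BSpecIn (Set.Iic A) :=
  ⟨(η : BSpec B).carrier ∩ Set.Iic A,
    (aux_restrict (aux_Iic_ideal A) (η : BSpec B).ultra (le_refl A) η.2).1⟩

lemma aux_BSpec_ext {ξ ζ : BSpec B} (h : ξ.carrier = ζ.carrier) : ξ = ζ := by
  cases ξ; cases ζ; cases h; rfl

lemma aux_BSpecIn_ext {I : Set B} {ξ ζ : BSpecIn I} (h : ξ.carrier = ζ.carrier) : ξ = ζ := by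
  cases ξ; cases ζ; cases h; rfl

end Aux

theorem stmt6 [GeneralizedBooleanAlgebra B] (I : Set B) (hI : IsBIdeal I) :
    (∀ ξ : Set B, IsBUltraIn I ξ → IsBUltra (iotaSet ξ)) ∧
      (∀ ξ ζ : Set B, IsBUltraIn I ξ → IsBUltraIn I ζ → iotaSet ξ = iotaSet ζ → ξ = ζ) ∧
      (∀ η : Set B, IsBUltra η →
        ((∃ ξ : Set B, IsBUltraIn I ξ ∧ iotaSet ξ = η) ↔ ∃ A ∈ I, A ∈ η)) ∧
      ∀ A : B, ∃ h : BSpecIn (Set.Iic A) ≃ₜ cylZ A,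
        ∀ ξ : BSpecIn (Set.Iic A), ((h ξ : BSpec B)).carrier = iotaSet ξ.carrier := by
  refine ⟨fun ξ hξ => aux_iota_ultra hξ, fun ξ ζ hξ hζ h => aux_iota_inj hξ hζ h, ?_, ?_⟩
  · intro η hη
    constructor
    · rintro ⟨ξ, hξ, rfl⟩
      obtain ⟨C, hC⟩ := hξ.1.1
      exact ⟨C, hξ.1.2.1 hC, C, hC, le_rfl⟩
    · rintro ⟨A, hAI, hAη⟩
      exact ⟨η ∩ I, (aux_restrict hI hη hAI hAη).1, (aux_restrict hI hη hAI hAη).2⟩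
  · intro A
    refine ⟨⟨⟨auxIotaMap A, auxIotaInv A, ?_, ?_⟩, ?_, ?_⟩, fun ξ => rfl⟩
    · intro ξ
      apply aux_BSpecIn_ext
      show iotaSet ξ.carrier ∩ Set.Iic A = ξ.carrier
      ext D
      constructor
      · rintro ⟨⟨C, hC, hle⟩, hD⟩
        exact ξ.ultra.1.2.2.2.1 C hC D hD hle
      · intro hD
        exact ⟨⟨D, hD, le_rfl⟩, ξ.ultra.1.2.1 hD⟩
    · intro η
      apply Subtype.ext
      apply aux_BSpec_ext
      exact (aux_restrict (aux_Iic_ideal A) (η : BSpec B).ultra (le_refl A) η.2).2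
    · apply Continuous.subtype_mk
      rw [continuous_generateFrom_iff]
      rintro S ⟨D, rfl⟩
      have hset : (fun ξ : BSpecIn (Set.Iic A) =>
            (⟨iotaSet ξ.carrier, aux_iota_ultra ξ.ultra⟩ : BSpec B)) ⁻¹'
            {ζ : BSpec B | D ∈ ζ.carrier} = {ξ | A ⊓ D ∈ ξ.carrier} := by
        ext ξ; exact aux_mem_iota_iff A D ξ
      rw [hset]
      exact TopologicalSpace.isOpen_generateFrom_of_mem ⟨A ⊓ D, inf_le_left, rfl⟩
    · rw [continuous_generateFrom_iff]
      rintro S ⟨E, hE, rfl⟩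
      have hset : auxIotaInv A ⁻¹' {ξ : BSpecIn (Set.Iic A) | E ∈ ξ.carrier} =
          (fun η : cylZ A => (η : BSpec B)) ⁻¹' {ζ : BSpec B | E ∈ ζ.carrier} := by
        ext η
        simp only [Set.mem_preimage, Set.mem_setOf_eq, auxIotaInv, Set.mem_inter_iff]
        exact ⟨fun h => h.1, fun h => ⟨h, hE⟩⟩
      rw [hset]
      have hopen : IsOpen {ζ : BSpec B | E ∈ ζ.carrier} :=
        TopologicalSpace.isOpen_generateFrom_of_mem ⟨E, rfl⟩
      exact hopen.preimage continuous_subtype_val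
end

section
/- Let E = (E⁰, E¹, d, r) be a 0-dimensional topological graph and {V_α}_{α∈L} a family of subsets of E¹ that compactly supports E. Let B be the collection of compact clopen subsets of E⁰, a generalized Boolean algebra under set intersection, union and difference. Then for each α ∈ L the map θ_α(A) := d(r⁻¹(A) ∩ V_α) sends B into B and preserves ∩, ∪, ∖ and ∅; the family {θ_α(A) : A ∈ B} has least upper bound R_α := d(V_α) in B; and θ_α(D_α) = R_α. Consequently every finite word over L gives a composite with compact range and closed domain, so (B, L, θ) is a Boolean dynamical system. -/
/-- The composite action `θ_{α_n} ∘ ⋯ ∘ θ_{α_1}` of a finite word `w = α_1 ⋯ α_n`. -/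
def wordAct {X L : Type*} (θ : L → X → X) (w : List L) (A : X) : X :=
  w.foldl (fun C a => θ a C) A

/-- The action `θ_a(A) := d(r⁻¹(A) ∩ V_a)` associated to a compactly supporting family. -/
def thGr {E0 E1 L : Type*} (d r : E1 → E0) (V : L → Set E1) (a : L) (A : Set E0) : Set E0 :=
  d '' (r ⁻¹' A ∩ V a)

/-- The collection of compact clopen subsets of a topological space, a generalized Boolean
algebra under set intersection, union and difference. -/
def ccs (E0 : Type*) [TopologicalSpace E0] : Set (Set E0) :=
  {A : Set E0 | IsCompact A ∧ IsClopen A}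


lemma injOn_image_diff' {α β : Type*} {f : α → β} {u s t : Set α}
    (h : Set.InjOn f u) (hs : s ⊆ u) (ht : t ⊆ u) : f '' (s \ t) = f '' s \ f '' t := by
  ext y
  constructor
  · rintro ⟨x, ⟨hxs, hxt⟩, rfl⟩
    refine ⟨⟨x, hxs, rfl⟩, ?_⟩
    rintro ⟨x', hx't, hx'⟩
    exact hxt (h (ht hx't) (hs hxs) hx' ▸ hx't)
  · rintro ⟨⟨x, hxs, rfl⟩, hy⟩
    exact ⟨x, ⟨hxs, fun hxt => hy ⟨x, hxt, rfl⟩⟩, rfl⟩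

theorem stmt9 {E0 E1 L : Type*} [TopologicalSpace E0] [TopologicalSpace E1]
    [T2Space E0] [T2Space E1] [LocallyCompactSpace E0] [LocallyCompactSpace E1]
    (hb0 : TopologicalSpace.IsTopologicalBasis {U : Set E0 | IsClopen U})
    (hb1 : TopologicalSpace.IsTopologicalBasis {U : Set E1 | IsClopen U})
    (d r : E1 → E0) (hd : IsLocalHomeomorph d) (hr : Continuous r)
    (V : L → Set E1)
    (hVcpt : ∀ a : L, IsCompact (V a)) (hVclopen : ∀ a : L, IsClopen (V a))
    (hVcover : (⋃ a : L, V a) = Set.univ)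
    (hVdisj : ∀ a b : L, a ≠ b → V a ∩ V b = ∅)
    (hVemb : ∀ a : L, Topology.IsEmbedding ((V a).restrict d))
    (D : L → Set E0)
    (hDcpt : ∀ a : L, IsCompact (D a)) (hDclopen : ∀ a : L, IsClopen (D a))
    (hDr : ∀ a : L, r '' V a ⊆ D a) :
    (∀ a : L, ∀ A ∈ ccs E0, thGr d r V a A ∈ ccs E0) ∧
      (∀ a : L, ∀ A ∈ ccs E0, ∀ C ∈ ccs E0,
        thGr d r V a (A ∩ C) = thGr d r V a A ∩ thGr d r V a C ∧
        thGr d r V a (A ∪ C) = thGr d r V a A ∪ thGr d r V a C ∧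
        thGr d r V a (A \ C) = thGr d r V a A \ thGr d r V a C) ∧
      (∀ a : L, thGr d r V a ∅ = ∅) ∧
      (∀ a : L, d '' V a ∈ ccs E0 ∧
        (∀ A ∈ ccs E0, thGr d r V a A ⊆ d '' V a) ∧
        ∀ U ∈ ccs E0, (∀ A ∈ ccs E0, thGr d r V a A ⊆ U) → d '' V a ⊆ U) ∧
      (∀ a : L, thGr d r V a (D a) = d '' V a) ∧
      ∀ w : List L, w ≠ [] →
        ∃ R ∈ ccs E0,
          (∀ A ∈ ccs E0, wordAct (thGr d r V) w A ⊆ R) ∧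
          (∀ U ∈ ccs E0, (∀ A ∈ ccs E0, wordAct (thGr d r V) w A ⊆ U) → R ⊆ U) ∧
          ∃ Dw ∈ ccs E0, wordAct (thGr d r V) w Dw = R := by

  have hdc : Continuous d := hd.continuous
  have hdo : IsOpenMap d := hd.isOpenMap
  have hinj : ∀ a, Set.InjOn d (V a) := fun a =>
    Set.injOn_iff_injective.mpr (hVemb a).injective
  have hccs : ∀ a : L, ∀ A ∈ ccs E0, thGr d r V a A ∈ ccs E0 := by
    rintro a A ⟨hAc, hAcl⟩
    have hclosed : IsClosed (r ⁻¹' A) := hAcl.isClosed.preimage hr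
    have hcpt : IsCompact (r ⁻¹' A ∩ V a) := (hVcpt a).inter_left hclosed
    have hopen : IsOpen (r ⁻¹' A ∩ V a) := (hAcl.isOpen.preimage hr).inter (hVclopen a).isOpen
    exact ⟨hcpt.image hdc, (hcpt.image hdc).isClosed, hdo _ hopen⟩
  have hVD : ∀ a : L, V a ⊆ r ⁻¹' D a := fun a => Set.image_subset_iff.mp (hDr a)
  have hDeq : ∀ a : L, thGr d r V a (D a) = d '' V a := by
    intro a
    unfold thGr
    rw [Set.inter_eq_self_of_subset_right (hVD a)]
  have hRccs : ∀ a : L, d '' V a ∈ ccs E0 := by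
    intro a
    exact ⟨(hVcpt a).image hdc, ((hVcpt a).image hdc).isClosed, hdo _ (hVclopen a).isOpen⟩
  have hub : ∀ a : L, ∀ A : Set E0, thGr d r V a A ⊆ d '' V a := fun a A =>
    Set.image_mono Set.inter_subset_right
  have hmono : ∀ a : L, ∀ A B : Set E0, A ⊆ B → thGr d r V a A ⊆ thGr d r V a B := by
    intro a A B hAB
    exact Set.image_mono (Set.inter_subset_inter_left _ (Set.preimage_mono hAB))
  have hops : ∀ a : L, ∀ A C : Set E0,
      thGr d r V a (A ∩ C) = thGr d r V a A ∩ thGr d r V a C ∧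
      thGr d r V a (A ∪ C) = thGr d r V a A ∪ thGr d r V a C ∧
      thGr d r V a (A \ C) = thGr d r V a A \ thGr d r V a C := by
    intro a A C
    have h1 : r ⁻¹' (A ∩ C) ∩ V a = (r ⁻¹' A ∩ V a) ∩ (r ⁻¹' C ∩ V a) := by
      ext x; simp only [Set.mem_inter_iff, Set.mem_preimage]; tauto
    have h2 : r ⁻¹' (A ∪ C) ∩ V a = (r ⁻¹' A ∩ V a) ∪ (r ⁻¹' C ∩ V a) := by
      ext x; simp only [Set.mem_inter_iff, Set.mem_union, Set.mem_preimage]; tauto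
    have h3 : r ⁻¹' (A \ C) ∩ V a = (r ⁻¹' A ∩ V a) \ (r ⁻¹' C ∩ V a) := by
      ext x; simp only [Set.mem_inter_iff, Set.mem_diff, Set.mem_preimage]; tauto
    unfold thGr
    refine ⟨?_, ?_, ?_⟩
    · rw [h1, (hinj a).image_inter Set.inter_subset_right Set.inter_subset_right]
    · rw [h2, Set.image_union]
    · rw [h3, injOn_image_diff' (hinj a) Set.inter_subset_right Set.inter_subset_right]
  have hwccs : ∀ w : List L, ∀ A ∈ ccs E0, wordAct (thGr d r V) w A ∈ ccs E0 := by
    intro w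
    induction w with
    | nil => intro A hA; exact hA
    | cons a t ih => intro A hA; exact ih _ (hccs a A hA)
  have hwmono : ∀ w : List L, ∀ A B : Set E0, A ⊆ B →
      wordAct (thGr d r V) w A ⊆ wordAct (thGr d r V) w B := by
    intro w
    induction w with
    | nil => intro A B h; exact h
    | cons a t ih => intro A B h; exact ih _ _ (hmono a A B h)
  refine ⟨hccs, fun a A _ C _ => hops a A C, ?_, ?_, hDeq, ?_⟩
  · intro a
    unfold thGr
    simp
  · intro a
    refine ⟨hRccs a, fun A _ => hub a A, fun U _ hU => ?_⟩
    have := hU (D a) ⟨hDcpt a, hDclopen a⟩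
    rwa [hDeq a] at this
  · rintro (_ | ⟨a, t⟩) hw
    · exact absurd rfl hw
    refine ⟨wordAct (thGr d r V) (a :: t) (D a),
      hwccs _ _ ⟨hDcpt a, hDclopen a⟩, ?_, ?_, D a, ⟨hDcpt a, hDclopen a⟩, rfl⟩
    · intro A _
      show wordAct (thGr d r V) t (thGr d r V a A) ⊆ wordAct (thGr d r V) t (thGr d r V a (D a))
      exact hwmono t _ _ ((hDeq a).symm ▸ hub a A)
    · intro U hUc hU
      exact hU (D a) ⟨hDcpt a, hDclopen a⟩
end

section
/- Let E = (E⁰, E¹, d, r) be a 0-dimensional topological graph with a family {V_α}_{α∈L} compactly supporting E, let B be the generalized Boolean algebra of compact clopen subsets of E⁰, and let θ_α(A) := d(r⁻¹(A) ∩ V_α). For A ∈ B, set Δ_A := {α ∈ L : θ_α(A) ≠ ∅} and λ_A := |Δ_A|. Then: (1) A ⊆ E⁰_sce if and only if λ_A = 0; (2) A ⊆ E⁰_fin if and only if λ_A < ∞; (3) A ⊆ E⁰_rg if and only if A is regular, i.e., every nonempty compact clopen B ⊆ A satisfies 0 < λ_B < ∞. -/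
lemma thGr_ne_iff {E0 E1 L : Type*} (d r : E1 → E0) (V : L → Set E1) (a : L) (A : Set E0) :
    thGr d r V a A ≠ ∅ ↔ (r ⁻¹' A ∩ V a).Nonempty := by
  rw [← Set.nonempty_iff_ne_empty, thGr, Set.image_nonempty]

lemma aux1 {E0 E1 L : Type*} [TopologicalSpace E0] [TopologicalSpace E1]
    (d r : E1 → E0) (V : L → Set E1)
    (hVcover : (⋃ a : L, V a) = Set.univ)
    (A : Set E0) (hAop : IsOpen A) :
    A ⊆ (closure (Set.range r))ᶜ ↔ {a : L | thGr d r V a A ≠ ∅} = ∅ := by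
  constructor
  · intro h
    rw [Set.eq_empty_iff_forall_notMem]
    intro a ha
    obtain ⟨x, hxA, _⟩ := (thGr_ne_iff d r V a A).mp ha
    exact h hxA (subset_closure ⟨x, rfl⟩)
  · intro h v hv hvc
    rw [mem_closure_iff] at hvc
    obtain ⟨y, hyA, x, rfl⟩ := hvc A hAop hv
    have hxU : x ∈ ⋃ a : L, V a := by rw [hVcover]; trivial
    obtain ⟨a, hxa⟩ := Set.mem_iUnion.mp hxU
    exact Set.eq_empty_iff_forall_notMem.mp h a ((thGr_ne_iff d r V a A).mpr ⟨x, hyA, hxa⟩)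

lemma aux2 {E0 E1 L : Type*} [TopologicalSpace E0] [TopologicalSpace E1]
    (d r : E1 → E0) (hr : Continuous r) (V : L → Set E1)
    (hVcpt : ∀ a : L, IsCompact (V a)) (hVclopen : ∀ a : L, IsClopen (V a))
    (hVcover : (⋃ a : L, V a) = Set.univ)
    (hVdisj : ∀ a b : L, a ≠ b → V a ∩ V b = ∅)
    (A : Set E0) (hA : IsCompact A ∧ IsClopen A) :
    A ⊆ {v : E0 | ∃ U : Set E0, IsOpen U ∧ v ∈ U ∧ IsCompact (r ⁻¹' U)} ↔
      {a : L | thGr d r V a A ≠ ∅}.Finite := by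
  have hclosed : IsClosed (r ⁻¹' A) := (hA.2.preimage hr).isClosed
  constructor
  · intro h
    choose U hUopen hUmem hUcpt using fun v (hv : v ∈ A) => h hv
    obtain ⟨t, ht⟩ := hA.1.elim_nhds_subcover' U
      (fun v hv => (hUopen v hv).mem_nhds (hUmem v hv))
    have hKc : IsCompact (r ⁻¹' A) := by
      refine IsCompact.of_isClosed_subset
        (t.isCompact_biUnion (fun v _ => hUcpt v v.2)) hclosed ?_
      intro x hx
      obtain ⟨v, hvmem⟩ := Set.mem_iUnion.mp (ht hx)
      simp only [Set.mem_iUnion] at hvmem ⊢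
      obtain ⟨hvt, hxv⟩ := hvmem
      exact ⟨v, hvt, hxv⟩
    obtain ⟨t2, ht2⟩ := hKc.elim_finite_subcover V (fun a => (hVclopen a).isOpen)
      (by rw [hVcover]; exact Set.subset_univ _)
    refine t2.finite_toSet.subset ?_
    intro a ha
    obtain ⟨x, hxA, hxa⟩ := (thGr_ne_iff d r V a A).mp ha
    obtain ⟨b, hbmem⟩ := Set.mem_iUnion.mp (ht2 hxA)
    simp only [Set.mem_iUnion] at hbmem
    obtain ⟨hbt, hxb⟩ := hbmem
    by_cases hab : a = b
    · exact hab ▸ hbt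
    · exact absurd (hVdisj a b hab ▸ Set.mem_inter hxa hxb) (Set.notMem_empty x)
  · intro hfin v hv
    refine ⟨A, hA.2.isOpen, hv, ?_⟩
    have heq : r ⁻¹' A = ⋃ a ∈ {a : L | thGr d r V a A ≠ ∅}, (r ⁻¹' A ∩ V a) := by
      ext x
      simp only [Set.mem_iUnion, Set.mem_setOf_eq, Set.mem_inter_iff, Set.mem_preimage]
      constructor
      · intro hx
        have hxU : x ∈ ⋃ a : L, V a := by rw [hVcover]; trivial
        obtain ⟨a, hxa⟩ := Set.mem_iUnion.mp hxU
        exact ⟨a, (thGr_ne_iff d r V a A).mpr ⟨x, hx, hxa⟩, hx, hxa⟩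
      · rintro ⟨a, -, hx, -⟩; exact hx
    rw [heq]
    exact hfin.isCompact_biUnion (fun a _ => (hVcpt a).inter_left hclosed)

theorem stmt10 {E0 E1 L : Type*} [TopologicalSpace E0] [TopologicalSpace E1]
    [T2Space E0] [T2Space E1] [LocallyCompactSpace E0] [LocallyCompactSpace E1]
    (hb0 : TopologicalSpace.IsTopologicalBasis {U : Set E0 | IsClopen U})
    (hb1 : TopologicalSpace.IsTopologicalBasis {U : Set E1 | IsClopen U})
    (d r : E1 → E0) (hd : IsLocalHomeomorph d) (hr : Continuous r)
    (V : L → Set E1)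
    (hVcpt : ∀ a : L, IsCompact (V a)) (hVclopen : ∀ a : L, IsClopen (V a))
    (hVcover : (⋃ a : L, V a) = Set.univ)
    (hVdisj : ∀ a b : L, a ≠ b → V a ∩ V b = ∅)
    (hVemb : ∀ a : L, Topology.IsEmbedding ((V a).restrict d))
    (D : L → Set E0)
    (hDcpt : ∀ a : L, IsCompact (D a)) (hDclopen : ∀ a : L, IsClopen (D a))
    (hDr : ∀ a : L, r '' V a ⊆ D a)
    (A : Set E0) (hA : A ∈ ccs E0) :
    (A ⊆ (closure (Set.range r))ᶜ ↔ {a : L | thGr d r V a A ≠ ∅} = ∅) ∧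
      (A ⊆ {v : E0 | ∃ U : Set E0, IsOpen U ∧ v ∈ U ∧ IsCompact (r ⁻¹' U)} ↔
        {a : L | thGr d r V a A ≠ ∅}.Finite) ∧
      (A ⊆ {v : E0 | ∃ U : Set E0, IsOpen U ∧ v ∈ U ∧ IsCompact (r ⁻¹' U)} \
            closure ((closure (Set.range r))ᶜ) ↔
        ∀ C ∈ ccs E0, C ⊆ A → C ≠ ∅ →
          ({a : L | thGr d r V a C ≠ ∅}.Nonempty ∧ {a : L | thGr d r V a C ≠ ∅}.Finite)) := by
  obtain ⟨hAcpt, hAclopen⟩ := hA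
  refine ⟨aux1 d r V hVcover A hAclopen.isOpen,
    aux2 d r hr V hVcpt hVclopen hVcover hVdisj A ⟨hAcpt, hAclopen⟩, ?_⟩
  constructor
  · intro hsub C hC hCA hCne
    obtain ⟨hCcpt, hCclopen⟩ := hC
    constructor
    · by_contra h'
      have hΔ : {a : L | thGr d r V a C ≠ ∅} = ∅ :=
        Set.not_nonempty_iff_eq_empty.mp h'
      have hCsub := (aux1 d r V hVcover C hCclopen.isOpen).mpr hΔ
      obtain ⟨x, hx⟩ := Set.nonempty_iff_ne_empty.mpr hCne
      exact (hsub (hCA hx)).2 (subset_closure (hCsub hx))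
    · exact (aux2 d r hr V hVcpt hVclopen hVcover hVdisj C ⟨hCcpt, hCclopen⟩).mp
        (fun v hv => (hsub (hCA hv)).1)
  · intro h v hv
    constructor
    · have hAne : A ≠ ∅ := Set.nonempty_iff_ne_empty.mp ⟨v, hv⟩
      exact (aux2 d r hr V hVcpt hVclopen hVcover hVdisj A
        ⟨hAcpt, hAclopen⟩).mpr (h A ⟨hAcpt, hAclopen⟩ subset_rfl hAne).2 hv
    · intro hvc
      rw [mem_closure_iff] at hvc
      obtain ⟨w, hwA, hwW⟩ := hvc A hAclopen.isOpen hv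
      -- find a compact clopen nonempty C ⊆ A ∩ (closure (range r))ᶜ
      obtain ⟨K, hKc, hKnhds⟩ := exists_compact_mem_nhds w
      have hOop : IsOpen (interior K ∩ (A ∩ (closure (Set.range r))ᶜ)) :=
        isOpen_interior.inter (hAclopen.isOpen.inter (isClosed_closure).isOpen_compl)
      have hwO : w ∈ interior K ∩ (A ∩ (closure (Set.range r))ᶜ) :=
        ⟨mem_interior_iff_mem_nhds.mpr hKnhds, hwA, hwW⟩
      obtain ⟨U, hUclopen, hwU, hUsub⟩ := hb0.exists_subset_of_mem_open hwO hOop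
      have hUcpt : IsCompact U := IsCompact.of_isClosed_subset hKc hUclopen.isClosed
        (fun x hx => interior_subset (hUsub hx).1)
      have hUne : U ≠ ∅ := Set.nonempty_iff_ne_empty.mp ⟨w, hwU⟩
      have hΔ := (h U ⟨hUcpt, hUclopen⟩ (fun x hx => (hUsub hx).2.1) hUne).1
      have hΔ' : {a : L | thGr d r V a U ≠ ∅} = ∅ :=
        (aux1 d r V hVcover U hUclopen.isOpen).mp (fun x hx => (hUsub hx).2.2)
      rw [hΔ'] at hΔ
      exact Set.not_nonempty_empty hΔ
end

section
/- Let B be a generalized Boolean algebra and let θ : B → B be an action with compact range R (the least upper bound of {θ(A) : A ∈ B}) and closed domain D (i.e., θ(D) = R). Let ξ be an ultrafilter of the principal ideal I_R and let A ∈ B. Then the following are equivalent: (1) θ(A) ∈ ξ; (2) there exists C ∈ I_D with C ⊆ A and θ(C) ∈ ξ. (In the associated topological graph this says: for the edge e^θ_ξ, one has r(e^θ_ξ) ∈ N_A if and only if d(e^θ_ξ) ∈ N_{θ(A)}.) -/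
variable {B : Type*}

theorem stmt13 [GeneralizedBooleanAlgebra B] (θ : B → B)
    (hinf : ∀ A C : B, θ (A ⊓ C) = θ A ⊓ θ C)
    (hsup : ∀ A C : B, θ (A ⊔ C) = θ A ⊔ θ C)
    (hsdiff : ∀ A C : B, θ (A \ C) = θ A \ θ C)
    (hbot : θ ⊥ = ⊥)
    (R D : B) (hR : IsLUB (Set.range θ) R) (hD : θ D = R)
    (ξ : Set B) (hξ : IsBUltraIn (Set.Iic R) ξ) (A : B) :
    θ A ∈ ξ ↔ ∃ C : B, C ≤ D ∧ C ≤ A ∧ θ C ∈ ξ := by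
  obtain ⟨⟨-, hsub, -, hup, -⟩, -⟩ := hξ
  have hθA : θ A ≤ R := hR.1 ⟨A, rfl⟩
  constructor
  · intro h
    refine ⟨A ⊓ D, inf_le_right, inf_le_left, ?_⟩
    rwa [hinf, hD, inf_eq_left.mpr hθA]
  · rintro ⟨C, -, hCA, hC⟩
    have : θ C ≤ θ A := by
      have := hinf C A
      rw [inf_eq_left.mpr hCA] at this
      exact le_of_eq_of_le this inf_le_right
    exact hup _ hC _ hθA this
end

section
/- Let B be a generalized Boolean algebra and let θ : B → B be a Boolean homomorphism with θ(∅) = ∅. Let ∅ ≠ A ∈ B and suppose that for every integer k ≥ 0 one has θ^k(A) ≠ ∅ and that every nonempty B ⊆ θ^k(A) satisfies B ∩ θ(B) ≠ ∅. Then θ(A) = A, and moreover θ(B) = B for every B ⊆ A. (This is the key step showing that a cycle (α, A) of a Boolean dynamical system forces θ_α to restrict to the identity on the principal ideal I_A.) -/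
theorem stmt14 {B : Type*} [GeneralizedBooleanAlgebra B] (θ : B → B)
    (hinf : ∀ A C : B, θ (A ⊓ C) = θ A ⊓ θ C)
    (hsup : ∀ A C : B, θ (A ⊔ C) = θ A ⊔ θ C)
    (hsdiff : ∀ A C : B, θ (A \ C) = θ A \ θ C)
    (hbot : θ ⊥ = ⊥)
    (A : B) (hA : A ≠ ⊥)
    (hne : ∀ k : ℕ, θ^[k] A ≠ ⊥)
    (hcyc : ∀ k : ℕ, ∀ C : B, C ≤ θ^[k] A → C ≠ ⊥ → C ⊓ θ C ≠ ⊥) :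
    θ A = A ∧ ∀ C : B, C ≤ A → θ C = C := by
  have mono : ∀ {C D : B}, C ≤ D → θ C ≤ θ D := by
    intro C D h
    have h1 : θ (C ⊓ D) = θ C ⊓ θ D := hinf C D
    rw [inf_eq_left.mpr h] at h1
    rw [h1]
    exact inf_le_right
  have key : ∀ C : B, C ≤ A → θ C = C := by
    intro C hC
    have h1 : C \ θ C = ⊥ := by
      by_contra h
      apply hcyc 0 (C \ θ C) (by simpa using le_trans sdiff_le hC) h
      have hle : (C \ θ C) ⊓ θ (C \ θ C) ≤ ⊥ := by
        rw [hsdiff]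
        calc (C \ θ C) ⊓ (θ C \ θ (θ C)) ≤ (C \ θ C) ⊓ θ C :=
              inf_le_inf_left _ sdiff_le
          _ = ⊥ := disjoint_sdiff_self_left.eq_bot
      exact le_bot_iff.mp hle
    have h2 : θ C \ C = ⊥ := by
      by_contra h
      apply hcyc 1 (θ C \ C) (by simpa using le_trans sdiff_le (mono hC)) h
      have hle : (θ C \ C) ⊓ θ (θ C \ C) ≤ ⊥ := by
        rw [hsdiff]
        calc (θ C \ C) ⊓ (θ (θ C) \ θ C) ≤ θ C ⊓ (θ (θ C) \ θ C) :=
              inf_le_inf_right _ sdiff_le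
          _ = ⊥ := disjoint_sdiff_self_right.eq_bot
      exact le_bot_iff.mp hle
    exact le_antisymm (sdiff_eq_bot_iff.mp h2) (sdiff_eq_bot_iff.mp h1)
  exact ⟨key A le_rfl, key⟩
end
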